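/- Let T be a homogeneous tree (a strong subtree of b^{<ℕ} of infinite height for some b ≥ 2) and n ≥ 1. Then every subset F of T of cardinality n is contained in a strong subtree of T of height 2n − 1. -/

import Mathlib

/-- Strict prefix relation on lists: the tree order on `b^{<ℕ}`. -/
def PLt {β : Type*} (s t : List β) : Prop := s <+: t ∧ s ≠ t

/-- The level of a node `t` in the tree `T ⊆ b^{<ℕ}`: the number of its strict
predecessors (strict prefixes) lying in `T`. -/
noncomputable def lvl {β : Type*} (T : Set (List β)) (t : List β) : ℕ :=
  {s ∈ T | PLt s t}.ncard

/-- `t` is an immediate successor of `s` in the tree `T`. -/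
def ImmSuc {β : Type*} (T : Set (List β)) (s t : List β) : Prop :=
  s ∈ T ∧ t ∈ T ∧ PLt s t ∧ ¬∃ u ∈ T, PLt s u ∧ PLt u t

/-- `T` is uniquely rooted: it has a node below all of its nodes. -/
def UniquelyRooted {β : Type*} (T : Set (List β)) : Prop :=
  ∃ r ∈ T, ∀ t ∈ T, r <+: t

/-- `C` is a maximal chain of the tree `T`. -/
def MaxChainIn {β : Type*} (T C : Set (List β)) : Prop :=
  C ⊆ T ∧ (∀ s ∈ C, ∀ t ∈ C, s <+: t ∨ t <+: s) ∧
    ∀ C', C ⊆ C' → C' ⊆ T → (∀ s ∈ C', ∀ t ∈ C', s <+: t ∨ t <+: s) → C' = C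

/-- `T` is balanced with all maximal chains of cardinality `h`
(i.e. balanced and of height `h`). -/
def BalancedOfHeight {β : Type*} (T : Set (List β)) (h : ℕ) : Prop :=
  ∀ C, MaxChainIn T C → C.Finite ∧ C.ncard = h

/-- Every level of `S` is a subset of some level of `T`. -/
def LevelsAligned {β : Type*} (T S : Set (List β)) : Prop :=
  ∀ s ∈ S, ∀ s' ∈ S, lvl S s = lvl S s' → lvl T s = lvl T s'

/-- For every non-maximal node `s` of `S` and every immediate successor `t` of `s`
in `T` there is a unique immediate successor `s'` of `s` in `S` with `t ≤ s'`. -/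
def SuccCond {β : Type*} (T S : Set (List β)) : Prop :=
  ∀ s ∈ S, (∃ x ∈ S, PLt s x) → ∀ t, ImmSuc T s t → ∃! s', ImmSuc S s s' ∧ t <+: s'

/-- `S` is a strong subtree of `T` of (finite) height `h`. -/
def IsStrongSubtreeFin {β : Type*} (T S : Set (List β)) (h : ℕ) : Prop :=
  S ⊆ T ∧ S.Nonempty ∧ UniquelyRooted S ∧ BalancedOfHeight S h ∧
    LevelsAligned T S ∧ SuccCond T S

/-- `S` is a strong subtree of `T` of infinite height (uniquely rooted, balanced with
all maximal chains infinite, levels of `S` inside levels of `T`, successor condition). -/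
def IsStrongSubtreeInf {β : Type*} (T S : Set (List β)) : Prop :=
  S ⊆ T ∧ S.Nonempty ∧ UniquelyRooted S ∧ (∀ s ∈ S, ∃ x ∈ S, PLt s x) ∧
    LevelsAligned T S ∧ SuccCond T S

/-- `r` is the root of `S`. -/
def IsRoot {β : Type*} (S : Set (List β)) (r : List β) : Prop :=
  r ∈ S ∧ ∀ x ∈ S, r <+: x

/-- `v` is the immediate successor of `u` in `S` in direction `p`, i.e. the unique
immediate successor of `u` in `S` extending `u⌢p`. -/
def DirSucc {β : Type*} (S : Set (List β)) (u : List β) (p : β) (v : List β) : Prop :=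
  ImmSuc S u v ∧ (u ++ [p]) <+: v


namespace Stmt9

open List

variable {β : Type*}

lemma prefix_antisymm {s t : List β} (h1 : s <+: t) (h2 : t <+: s) : s = t :=
  h1.eq_of_length (le_antisymm h1.length_le h2.length_le)

lemma _root_.PLt.length_lt {s t : List β} (h : PLt s t) : s.length < t.length :=
  lt_of_le_of_ne h.1.length_le (fun he => h.2 (h.1.eq_of_length he))

lemma plt_irrefl (s : List β) : ¬ PLt s s := fun h => h.2 rfl

lemma _root_.PLt.trans_prefix {s t u : List β} (h : PLt s t) (h2 : t <+: u) : PLt s u :=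
  ⟨h.1.trans h2, fun he => by
    have := h.length_lt.trans_le h2.length_le; rw [he] at this; exact absurd this (lt_irrefl _)⟩

lemma _root_.List.IsPrefix.trans_plt {s t u : List β} (h : s <+: t) (h2 : PLt t u) : PLt s u :=
  ⟨h.trans h2.1, fun he => by
    have := h.length_le.trans_lt h2.length_lt; rw [he] at this; exact absurd this (lt_irrefl _)⟩

lemma plt_of_prefix_length {s t : List β} (h : s <+: t) (hl : s.length < t.length) : PLt s t :=
  ⟨h, fun he => by simp [he] at hl⟩

lemma plt_snoc (s : List β) (p : β) : PLt s (s ++ [p]) :=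
  plt_of_prefix_length ⟨[p], rfl⟩ (by simp)

lemma prefix_finite (t : List β) : {s | s <+: t}.Finite := by
  have : {s | s <+: t} = {s | s ∈ t.inits} := by ext s; simp [List.mem_inits]
  rw [this]; exact t.inits.finite_toSet

lemma exists_snoc_prefix {s t : List β} (h : PLt s t) : ∃ p, s ++ [p] <+: t := by
  obtain ⟨u, hu⟩ := h.1
  have hne : u ≠ [] := by
    rintro rfl
    have : s = t := by simpa using hu
    exact h.2 this
  obtain ⟨p, u', rfl⟩ := List.exists_cons_of_ne_nil hne
  exact ⟨p, ⟨u', by simpa using hu⟩⟩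

lemma snoc_prefix_unique {s t : List β} {p q : β} (h1 : s ++ [p] <+: t) (h2 : s ++ [q] <+: t) :
    p = q := by
  have := prefix_antisymm (List.prefix_of_prefix_length_le h1 h2 (by simp))
    (List.prefix_of_prefix_length_le h2 h1 (by simp))
  simpa using this

/-! ### Level lemmas -/

lemma lvl_set_finite (T : Set (List β)) (t : List β) : {s ∈ T | PLt s t}.Finite :=
  (prefix_finite t).subset (fun s hs => hs.2.1)

lemma lvl_strict_mono {T : Set (List β)} {x y : List β} (hx : x ∈ T) (h : PLt x y) :
    lvl T x < lvl T y := by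
  apply Set.ncard_lt_ncard _ (lvl_set_finite T y)
  constructor
  · rintro s ⟨hsT, hs⟩; exact ⟨hsT, hs.trans_prefix h.1⟩
  · intro hsub
    exact plt_irrefl x (hsub ⟨hx, h⟩).2

lemma lvl_mono {T : Set (List β)} {x y : List β} (hx : x ∈ T) (h : x <+: y) :
    lvl T x ≤ lvl T y := by
  by_cases he : x = y
  · subst he; exact le_rfl
  · exact (lvl_strict_mono hx ⟨h, he⟩).le

lemma eq_of_prefix_lvl {T : Set (List β)} {x y a : List β} (hx : x ∈ T) (hy : y ∈ T)
    (hxa : x <+: a) (hya : y <+: a) (h : lvl T x = lvl T y) : x = y := by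
  rcases List.prefix_or_prefix_of_prefix hxa hya with hc | hc
  · by_cases he : x = y
    · exact he
    · exact absurd h (lvl_strict_mono hx ⟨hc, he⟩).ne
  · by_cases he : y = x
    · exact he.symm
    · exact absurd h.symm (lvl_strict_mono hy ⟨hc, he⟩).ne

/-! ### Longest common prefix -/

variable {α : Type*} [DecidableEq α]

def lcp : List α → List α → List α
  | a :: s, c :: t => if a = c then a :: lcp s t else []
  | _, _ => []

lemma lcp_prefix_left : ∀ s t : List α, lcp s t <+: s
  | [], _ => by simp [lcp]
  | a :: s, [] => by simp [lcp]
  | a :: s, c :: t => by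
    by_cases h : a = c
    · subst h; simpa [lcp] using lcp_prefix_left s t
    · simp [lcp, h]

lemma lcp_prefix_right : ∀ s t : List α, lcp s t <+: t
  | [], _ => by simp [lcp]
  | a :: s, [] => by simp [lcp]
  | a :: s, c :: t => by
    by_cases h : a = c
    · subst h; simpa [lcp] using lcp_prefix_right s t
    · simp [lcp, h]

lemma prefix_lcp : ∀ {x s t : List α}, x <+: s → x <+: t → x <+: lcp s t
  | [], _, _, _, _ => by simp
  | a :: x, s, t, hs, ht => by
    obtain ⟨s', rfl⟩ := hs
    obtain ⟨t', ht'⟩ := ht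
    rw [List.cons_append] at ht' ⊢
    match t, ht' with
    | _, rfl =>
      have : x <+: x ++ s' := ⟨s', rfl⟩
      have h2 : x <+: x ++ t' := ⟨t', rfl⟩
      simpa [lcp] using prefix_lcp this h2

lemma lcp_comm (s t : List α) : lcp s t = lcp t s :=
  prefix_antisymm (prefix_lcp (lcp_prefix_right s t) (lcp_prefix_left s t))
    (prefix_lcp (lcp_prefix_right t s) (lcp_prefix_left t s))

lemma lcp_self (s : List α) : lcp s s = s :=
  prefix_antisymm (lcp_prefix_left s s) (prefix_lcp List.prefix_rfl List.prefix_rfl)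

lemma lcp_lcp (a c f : List α) : lcp (lcp a c) f = lcp a f ∨ lcp (lcp a c) f = lcp c f := by
  have h1 : lcp (lcp a c) f <+: lcp a f :=
    prefix_lcp ((lcp_prefix_left _ _).trans (lcp_prefix_left a c)) (lcp_prefix_right _ _)
  have h2 : lcp (lcp a c) f <+: lcp c f :=
    prefix_lcp ((lcp_prefix_left _ _).trans (lcp_prefix_right a c)) (lcp_prefix_right _ _)
  rcases List.prefix_or_prefix_of_prefix (lcp_prefix_right a f) (lcp_prefix_right c f) with hc | hc
  · left
    refine prefix_antisymm h1 (prefix_lcp (prefix_lcp (lcp_prefix_left a f)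
      (hc.trans (lcp_prefix_left c f))) (lcp_prefix_right a f))
  · right
    refine prefix_antisymm h2 (prefix_lcp (prefix_lcp (hc.trans (lcp_prefix_left a f))
      (lcp_prefix_left c f)) (lcp_prefix_right c f))


/-! ### Structure of the ambient homogeneous tree -/

section Tree

variable {b : ℕ} {T : Set (List (Fin b))}

lemma immSuc_univ (s : List (Fin b)) (p : Fin b) : ImmSuc Set.univ s (s ++ [p]) := by
  refine ⟨trivial, trivial, plt_snoc s p, ?_⟩
  rintro ⟨u, -, h1, h2⟩
  have := h1.length_lt
  have := h2.length_lt
  simp at this; omega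

open Classical in
noncomputable def succT (T : Set (List (Fin b))) (u : List (Fin b)) (p : Fin b) :
    List (Fin b) :=
  if h : ∃ t, ImmSuc T u t ∧ u ++ [p] <+: t then h.choose else []

variable (hT : IsStrongSubtreeInf Set.univ T)
include hT

lemma succT_exu (hu : u ∈ T) (p : Fin b) : ∃! s', ImmSuc T u s' ∧ u ++ [p] <+: s' :=
  hT.2.2.2.2.2 u hu (hT.2.2.2.1 u hu) (u ++ [p]) (immSuc_univ u p)

lemma succT_spec (hu : u ∈ T) (p : Fin b) :
    ImmSuc T u (succT T u p) ∧ u ++ [p] <+: succT T u p := by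
  obtain ⟨s', hs', -⟩ := succT_exu hT hu p
  rw [succT, dif_pos ⟨s', hs'⟩]
  exact (Exists.choose_spec (⟨s', hs'⟩ : ∃ t, ImmSuc T u t ∧ u ++ [p] <+: t))

lemma succT_mem (hu : u ∈ T) (p : Fin b) : succT T u p ∈ T := (succT_spec hT hu p).1.2.1

lemma succT_plt (hu : u ∈ T) (p : Fin b) : PLt u (succT T u p) := (succT_spec hT hu p).1.2.2.1

lemma succT_unique (hu : u ∈ T) {p : Fin b} {t : List (Fin b)}
    (h : ImmSuc T u t ∧ u ++ [p] <+: t) : t = succT T u p := by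
  obtain ⟨s', -, huniq⟩ := succT_exu hT hu p
  rw [huniq t h, huniq (succT T u p) (succT_spec hT hu p)]

lemma succT_prefix_of_plt (hu : u ∈ T) (hv : v ∈ T) (huv : PLt u v) {p : Fin b}
    (hp : u ++ [p] <+: v) : succT T u p <+: v := by
  classical
  set S0 : Set (List (Fin b)) := {x ∈ T | PLt u x ∧ x <+: v} with hS0
  have hfin : S0.Finite := (prefix_finite v).subset (fun s hs => hs.2.2)
  have hne : S0.Nonempty := ⟨v, hv, huv, List.prefix_rfl⟩
  obtain ⟨w, hwS, hwmin⟩ := Set.exists_min_image S0 List.length hfin hne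
  obtain ⟨hwT, hwplt, hwv⟩ := hwS
  have himm : ImmSuc T u w := by
    refine ⟨hu, hwT, hwplt, ?_⟩
    rintro ⟨z, hzT, hz1, hz2⟩
    have hzS : z ∈ S0 := ⟨hzT, hz1, hz2.1.trans hwv⟩
    exact absurd (hwmin z hzS) (by have := hz2.length_lt; omega)
  obtain ⟨p', hp'⟩ := exists_snoc_prefix hwplt
  have hpp : p' = p := snoc_prefix_unique (hp'.trans hwv) hp
  rw [← hpp] at hp
  have := succT_unique hT hu ⟨himm, hp'⟩
  rw [hpp] at this
  rw [← this]
  exact hwv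

lemma immSuc_eq_succT (h : ImmSuc T u t) : ∃ p, t = succT T u p := by
  obtain ⟨p, hp⟩ := exists_snoc_prefix h.2.2.1
  exact ⟨p, succT_unique hT h.1 ⟨h, hp⟩⟩

lemma lvl_succT (hu : u ∈ T) (p : Fin b) : lvl T (succT T u p) = lvl T u + 1 := by
  have hseq : {s ∈ T | PLt s (succT T u p)} = insert u {s ∈ T | PLt s u} := by
    ext s
    simp only [Set.mem_setOf_eq, Set.mem_insert_iff]
    constructor
    · rintro ⟨hsT, hs⟩
      by_cases he : s = u
      · exact Or.inl he
      · rcases List.prefix_or_prefix_of_prefix hs.1 (succT_plt hT hu p).1 with hc | hc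
        · exact Or.inr ⟨hsT, hc, he⟩
        · exfalso
          exact (succT_spec hT hu p).1.2.2.2 ⟨s, hsT, ⟨hc, fun he2 => he (he2.symm)⟩, hs⟩
    · rintro (rfl | ⟨hsT, hs⟩)
      · exact ⟨hu, succT_plt hT hu p⟩
      · exact ⟨hsT, hs.trans_prefix (succT_plt hT hu p).1⟩
  rw [lvl, hseq, Set.ncard_insert_of_notMem (fun h => plt_irrefl u h.2) (lvl_set_finite T u)]
  rfl

omit hT in
lemma exists_prefix_at_lvl_aux :
    ∀ N, ∀ u, u ∈ T → ∀ e, lvl T u ≤ N → e ≤ lvl T u →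
      ∃ w ∈ T, w <+: u ∧ lvl T w = e := by
  intro N
  induction N with
  | zero => intro u hu e _ he; exact ⟨u, hu, List.prefix_rfl, by omega⟩
  | succ N ih =>
    intro u hu e hN he
    by_cases heq : e = lvl T u
    · exact ⟨u, hu, List.prefix_rfl, heq.symm⟩
    have helt : e < lvl T u := lt_of_le_of_ne he heq
    have hpos : 0 < lvl T u := Nat.pos_of_ne_zero (by omega)
    have hne : {s ∈ T | PLt s u}.Nonempty := by
      rw [Set.nonempty_iff_ne_empty]
      intro h
      rw [lvl, h] at hpos; simp at hpos
    obtain ⟨x, hxS, hxmax⟩ := Set.exists_max_image _ List.length (lvl_set_finite T u) hne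
    obtain ⟨hxT, hxu⟩ := hxS
    have hseq : {s ∈ T | PLt s u} = insert x {s ∈ T | PLt s x} := by
      ext s
      simp only [Set.mem_setOf_eq, Set.mem_insert_iff]
      constructor
      · rintro ⟨hsT, hs⟩
        by_cases heq2 : s = x
        · exact Or.inl heq2
        · rcases List.prefix_or_prefix_of_prefix hs.1 hxu.1 with hc | hc
          · exact Or.inr ⟨hsT, hc, heq2⟩
          · exfalso
            have : PLt x s := ⟨hc, fun h2 => heq2 h2.symm⟩
            exact absurd (hxmax s ⟨hsT, hs⟩) (by have := this.length_lt; omega)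
      · rintro (rfl | ⟨hsT, hs⟩)
        · exact ⟨hxT, hxu⟩
        · exact ⟨hsT, hs.trans_prefix hxu.1⟩
    have hlx : lvl T u = lvl T x + 1 := by
      rw [lvl, hseq, Set.ncard_insert_of_notMem (fun h => plt_irrefl x h.2) (lvl_set_finite T x)]
      rfl
    have := ih x hxT e (by omega) (by omega)
    obtain ⟨w, hwT, hwx, hwl⟩ := this
    exact ⟨w, hwT, hwx.trans hxu.1, hwl⟩

lemma exists_prefix_at_lvl (hu : u ∈ T) {e : ℕ} (he : e ≤ lvl T u) :
    ∃ w ∈ T, w <+: u ∧ lvl T w = e :=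
  exists_prefix_at_lvl_aux (lvl T u) u hu e le_rfl he

lemma exists_ext_at_lvl (hb : 0 < b) (hu : u ∈ T) :
    ∀ e, lvl T u ≤ e → ∃ v ∈ T, u <+: v ∧ lvl T v = e := by
  intro e
  induction e with
  | zero => intro he; exact ⟨u, hu, List.prefix_rfl, by omega⟩
  | succ e ih =>
    intro he
    by_cases heq : lvl T u = e + 1
    · exact ⟨u, hu, List.prefix_rfl, heq⟩
    have h2 : lvl T u ≤ e := by omega
    obtain ⟨v, hvT, huv, hvl⟩ := ih h2
    refine ⟨succT T v ⟨0, hb⟩, succT_mem hT hvT _, huv.trans (succT_plt hT hvT _).1, ?_⟩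
    rw [lvl_succT hT hvT, hvl]

lemma lcp_mem (ha : a ∈ T) (hc : a' ∈ T) : lcp a a' ∈ T := by
  rcases List.prefix_or_prefix_of_prefix (List.prefix_rfl : a <+: a) (lcp_prefix_left a a') with h | h
  · -- a <+: lcp, so lcp = a
    rwa [prefix_antisymm (lcp_prefix_left a a') h] 
  · by_cases hcomp : a <+: a' ∨ a' <+: a
    · rcases hcomp with h2 | h2
      · rwa [prefix_antisymm (lcp_prefix_left a a') (prefix_lcp List.prefix_rfl h2)]
      · rwa [prefix_antisymm (lcp_prefix_right a a') (prefix_lcp h2 List.prefix_rfl)]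
    push_neg at hcomp
    -- maximal common T-predecessor
    set S0 : Set (List (Fin b)) := {x ∈ T | x <+: a ∧ x <+: a'} with hS0
    have hfin : S0.Finite := (prefix_finite a).subset (fun s hs => hs.2.1)
    obtain ⟨r, hrT, hr⟩ := hT.2.2.1
    have hne : S0.Nonempty := ⟨r, hrT, hr a ha, hr a' hc⟩
    obtain ⟨x, hxS, hxmax⟩ := Set.exists_max_image _ List.length hfin hne
    obtain ⟨hxT, hxa, hxa'⟩ := hxS
    have hxlcp : x <+: lcp a a' := prefix_lcp hxa hxa'
    by_cases hxe : x = lcp a a'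
    · rwa [← hxe]
    exfalso
    obtain ⟨p, hp⟩ := exists_snoc_prefix ⟨hxlcp, hxe⟩
    have hpa : x ++ [p] <+: a := hp.trans (lcp_prefix_left a a')
    have hpa' : x ++ [p] <+: a' := hp.trans (lcp_prefix_right a a')
    have hplta : PLt x a := plt_of_prefix_length hxa (by have := hpa.length_le; simp at this; omega)
    have hplta' : PLt x a' :=
      plt_of_prefix_length hxa' (by have := hpa'.length_le; simp at this; omega)
    have h1 := succT_prefix_of_plt hT hxT ha hplta hpa
    have h2 := succT_prefix_of_plt hT hxT hc hplta' hpa'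
    have hmem : succT T x p ∈ S0 := ⟨succT_mem hT hxT p, h1, h2⟩
    have := hxmax _ hmem
    have hlen := (succT_plt hT hxT p).length_lt
    omega

lemma succT_dir_unique (hu : u ∈ T) {p q : Fin b} {w : List (Fin b)}
    (h1 : succT T u p <+: w) (h2 : succT T u q <+: w) : p = q := by
  have imm1 := (succT_spec hT hu p).1
  have imm2 := (succT_spec hT hu q).1
  have heq : succT T u p = succT T u q := by
    rcases List.prefix_or_prefix_of_prefix h1 h2 with hc | hc
    · by_contra hne
      exact imm2.2.2.2 ⟨_, imm1.2.1, imm1.2.2.1, ⟨hc, hne⟩⟩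
    · by_contra hne
      exact imm1.2.2.2 ⟨_, imm2.2.1, imm2.2.2.1, ⟨hc, fun he => hne he.symm⟩⟩
  exact snoc_prefix_unique (heq ▸ (succT_spec hT hu p).2) (succT_spec hT hu q).2

end Tree


/-! ### Cardinality of the meet closure -/

lemma lcp_closure_card {α : Type*} [DecidableEq α] (G : Finset (List α)) (hG : G.Nonempty) :
    (Finset.image₂ lcp G G).card ≤ 2 * G.card - 1 := by
  induction hG using Finset.Nonempty.cons_induction with
  | singleton x => simp [lcp_self]
  | cons x G hx hG ih =>
    rw [Finset.cons_eq_insert]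
    have heq : Finset.image₂ lcp (insert x G) (insert x G) =
        insert x ((G.image (lcp x)) ∪ Finset.image₂ lcp G G) := by
      rw [Finset.image₂_insert_left, Finset.image₂_insert_right, Finset.image_insert, lcp_self]
      have himg : G.image (lcp · x) = G.image (lcp x) :=
        Finset.image_congr (fun a _ => lcp_comm a x)
      rw [himg]
      ext y
      simp only [Finset.mem_insert, Finset.mem_union]
      tauto
    rw [heq]
    obtain ⟨f0, hf0G, hmax⟩ := (G.image (lcp x)).exists_max_image List.length (hG.image _)
    obtain ⟨g0, hg0, hg0e⟩ := Finset.mem_image.mp hf0G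
    have hsub : G.image (lcp x) ⊆ insert f0 (Finset.image₂ lcp G G) := by
      intro y hy
      obtain ⟨g, hg, rfl⟩ := Finset.mem_image.mp hy
      by_cases he : lcp x g = f0
      · simp [he]
      · have hlen := hmax _ hy
        subst hg0e
        have hcomp : lcp x g <+: lcp x g0 :=
          List.prefix_of_prefix_length_le (lcp_prefix_left x g) (lcp_prefix_left x g0) hlen
        have h1 : lcp x g <+: lcp g0 g :=
          prefix_lcp (hcomp.trans (lcp_prefix_right x g0)) (lcp_prefix_right x g)
        have h2 : lcp g0 g <+: lcp x g := by
          rcases List.prefix_or_prefix_of_prefix (lcp_prefix_right x g0)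
            (lcp_prefix_left g0 g) with hc | hc
          · exact absurd (prefix_antisymm hcomp (prefix_lcp (lcp_prefix_left x g0)
              (hc.trans (lcp_prefix_right g0 g)))) he
          · exact prefix_lcp (hc.trans (lcp_prefix_left x g0)) (lcp_prefix_right g0 g)
        have heq2 : lcp x g = lcp g0 g := prefix_antisymm h1 h2
        exact Finset.mem_insert_of_mem (by rw [heq2]; exact Finset.mem_image₂_of_mem hg0 hg)
    have hc1 : (insert x ((G.image (lcp x)) ∪ Finset.image₂ lcp G G)).card ≤
        1 + ((G.image (lcp x)) ∪ Finset.image₂ lcp G G).card := by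
      have := Finset.card_insert_le x ((G.image (lcp x)) ∪ Finset.image₂ lcp G G)
      omega
    have hc2 : ((G.image (lcp x)) ∪ Finset.image₂ lcp G G).card ≤
        (insert f0 (Finset.image₂ lcp G G)).card := by
      apply Finset.card_le_card
      intro y hy
      rcases Finset.mem_union.mp hy with hy | hy
      · exact hsub hy
      · exact Finset.mem_insert_of_mem hy
    have hc3 := Finset.card_insert_le f0 (Finset.image₂ lcp G G)
    have hc4 := Finset.card_insert_of_notMem hx
    have hGc : 1 ≤ G.card := Finset.card_pos.mpr hG
    rw [hc4]
    omega

/-! ### The choice functions and one-step extension -/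

section Build

variable {b : ℕ} {T : Set (List (Fin b))}

open Classical in
noncomputable def anc (T : Set (List (Fin b))) (a : List (Fin b)) (e : ℕ) : List (Fin b) :=
  if h : ∃ w ∈ T, w <+: a ∧ lvl T w = e then h.choose else []

open Classical in
noncomputable def extT (T : Set (List (Fin b))) (t : List (Fin b)) (e : ℕ) : List (Fin b) :=
  if h : ∃ v ∈ T, t <+: v ∧ lvl T v = e then h.choose else []

open Classical in
noncomputable def step (T : Set (List (Fin b))) (A : Finset (List (Fin b))) (d : ℕ → ℕ)
    (cur : List (Fin b)) (j : ℕ) (p : Fin b) : List (Fin b) :=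
  if h : ∃ a ∈ A, d (j+1) ≤ lvl T a ∧ succT T cur p <+: anc T a (d (j+1)) then
    anc T h.choose (d (j+1))
  else extT T (succT T cur p) (d (j+1))

noncomputable def fgo (T : Set (List (Fin b))) (A : Finset (List (Fin b))) (d : ℕ → ℕ) :
    List (Fin b) → ℕ → List (Fin b) → List (Fin b)
  | cur, _, [] => cur
  | cur, j, p :: rest => fgo T A d (step T A d cur j p) (j+1) rest

variable (hT : IsStrongSubtreeInf Set.univ T)
include hT

lemma anc_spec {a : List (Fin b)} (ha : a ∈ T) {e : ℕ} (he : e ≤ lvl T a) :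
    anc T a e ∈ T ∧ anc T a e <+: a ∧ lvl T (anc T a e) = e := by
  have h := exists_prefix_at_lvl hT ha he
  rw [anc, dif_pos h]
  exact h.choose_spec

lemma anc_unique {a w : List (Fin b)} {e : ℕ} (ha : a ∈ T) (hw : w ∈ T) (hwa : w <+: a)
    (he : lvl T w = e) : w = anc T a e := by
  have hle : e ≤ lvl T a := he ▸ lvl_mono hw hwa
  obtain ⟨h1, h2, h3⟩ := anc_spec hT ha hle
  exact eq_of_prefix_lvl hw h1 hwa h2 (by rw [he, h3])

lemma anc_self {a : List (Fin b)} (ha : a ∈ T) : anc T a (lvl T a) = a :=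
  (anc_unique hT ha ha List.prefix_rfl rfl).symm

lemma extT_spec (hb : 0 < b) {t : List (Fin b)} (ht : t ∈ T) {e : ℕ} (he : lvl T t ≤ e) :
    extT T t e ∈ T ∧ t <+: extT T t e ∧ lvl T (extT T t e) = e := by
  have h := exists_ext_at_lvl hT hb ht e he
  rw [extT, dif_pos h]
  exact h.choose_spec

variable {A : Finset (List (Fin b))} {d : ℕ → ℕ}

lemma step_spec (hb : 0 < b) (hAT : ↑A ⊆ T) {cur : List (Fin b)} {j : ℕ}
    (hcur : cur ∈ T) (hlvl : lvl T cur = d j) (hdj : d j < d (j+1)) (p : Fin b) :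
    step T A d cur j p ∈ T ∧ lvl T (step T A d cur j p) = d (j+1) ∧
      succT T cur p <+: step T A d cur j p := by
  rw [step]
  split_ifs with h
  · obtain ⟨haA, hale, hpre⟩ := h.choose_spec
    obtain ⟨h1, h2, h3⟩ := anc_spec hT (hAT haA) hale
    exact ⟨h1, h3, hpre⟩
  · have ht : succT T cur p ∈ T := succT_mem hT hcur p
    have hlt : lvl T (succT T cur p) ≤ d (j+1) := by
      rw [lvl_succT hT hcur, hlvl]; omega
    obtain ⟨h1, h2, h3⟩ := extT_spec hT hb ht hlt
    exact ⟨h1, h3, h2⟩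

lemma step_capture (hAT : ↑A ⊆ T) (hAlcp : ∀ a ∈ A, ∀ a' ∈ A, lcp a a' ∈ A) {j : ℕ}
    (hgap : ∀ a ∈ A, d j < lvl T a → d (j+1) ≤ lvl T a)
    {cur : List (Fin b)} (hcur : cur ∈ T) (hlvl : lvl T cur = d j) {p : Fin b}
    {a : List (Fin b)} (haA : a ∈ A) (hale : d (j+1) ≤ lvl T a)
    (hpre : succT T cur p <+: anc T a (d (j+1))) :
    step T A d cur j p = anc T a (d (j+1)) := by
  have hex : ∃ a ∈ A, d (j+1) ≤ lvl T a ∧ succT T cur p <+: anc T a (d (j+1)) :=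
    ⟨a, haA, hale, hpre⟩
  rw [step, dif_pos hex]
  obtain ⟨ha'A, ha'le, ha'pre⟩ := hex.choose_spec
  set a' := hex.choose with ha'
  set e := d (j+1) with hedef
  set t := succT T cur p with htdef
  have ht : t ∈ T := succT_mem hT hcur p
  have htl : lvl T t = d j + 1 := by rw [htdef, lvl_succT hT hcur, hlvl]
  obtain ⟨hwa1, hwa2, hwa3⟩ := anc_spec hT (hAT haA) hale
  obtain ⟨hwa'1, hwa'2, hwa'3⟩ := anc_spec hT (hAT ha'A) ha'le
  have hta : t <+: a := hpre.trans hwa2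
  have hta' : t <+: a' := ha'pre.trans hwa'2
  have hgA : lcp a a' ∈ A := hAlcp a haA a' ha'A
  have hgT : lcp a a' ∈ T := hAT hgA
  have htg : t <+: lcp a a' := prefix_lcp hta hta'
  have hglvl : d (j+1) ≤ lvl T (lcp a a') := by
    apply hgap _ hgA
    have := lvl_mono ht htg
    omega
  obtain ⟨hw1, hw2, hw3⟩ := anc_spec hT hgT hglvl
  have h1 : anc T (lcp a a') e = anc T a e :=
    anc_unique hT (hAT haA) hw1 (hw2.trans (lcp_prefix_left a a')) hw3
  have h2 : anc T (lcp a a') e = anc T a' e :=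
    anc_unique hT (hAT ha'A) hw1 (hw2.trans (lcp_prefix_right a a')) hw3
  rw [← h2, h1]

omit hT in
lemma fgo_snoc (cur : List (Fin b)) (j : ℕ) (σ : List (Fin b)) (p : Fin b) :
    fgo T A d cur j (σ ++ [p]) = step T A d (fgo T A d cur j σ) (j + σ.length) p := by
  induction σ generalizing cur j with
  | nil => simp [fgo]
  | cons q σ ih =>
    rw [List.cons_append, fgo, fgo, ih]
    simp only [List.length_cons]
    ring_nf

end Build


/-! ### The setup bundle and the embedding `f` -/

structure Setup (b : ℕ) where
  T : Set (List (Fin b))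
  A : Finset (List (Fin b))
  d : ℕ → ℕ
  r : List (Fin b)
  hb : 0 < b
  hT : IsStrongSubtreeInf Set.univ T
  hAT : ↑A ⊆ T
  hAlcp : ∀ a ∈ A, ∀ a' ∈ A, lcp a a' ∈ A
  hd : StrictMono d
  hgap : ∀ j, ∀ a ∈ A, d j < lvl T a → d (j+1) ≤ lvl T a
  hr : r ∈ T
  hrl : lvl T r = d 0
  hrA : ∀ a ∈ A, r <+: a

namespace Setup

variable {b : ℕ} (E : Setup b)

noncomputable def f (σ : List (Fin b)) : List (Fin b) := fgo E.T E.A E.d E.r 0 σ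

lemma f_nil : E.f [] = E.r := rfl

lemma f_snoc (σ : List (Fin b)) (p : Fin b) :
    E.f (σ ++ [p]) = step E.T E.A E.d (E.f σ) σ.length p := by
  rw [f, f, fgo_snoc]
  norm_num

lemma f_mem_lvl (σ : List (Fin b)) : E.f σ ∈ E.T ∧ lvl E.T (E.f σ) = E.d σ.length := by
  induction σ using List.reverseRecOn with
  | nil => exact ⟨E.hr, E.hrl⟩
  | append_singleton σ p ih =>
    rw [f_snoc]
    obtain ⟨h1, h2, -⟩ := step_spec E.hT E.hb E.hAT ih.1 ih.2 (E.hd (by omega)) p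
    simpa using ⟨h1, h2⟩

lemma f_mem (σ : List (Fin b)) : E.f σ ∈ E.T := (E.f_mem_lvl σ).1

lemma f_lvl (σ : List (Fin b)) : lvl E.T (E.f σ) = E.d σ.length := (E.f_mem_lvl σ).2

lemma f_succ_prefix (σ : List (Fin b)) (p : Fin b) :
    succT E.T (E.f σ) p <+: E.f (σ ++ [p]) := by
  rw [f_snoc]
  exact (step_spec E.hT E.hb E.hAT (E.f_mem σ) (E.f_lvl σ) (E.hd (by omega)) p).2.2

lemma f_snoc_plt (σ : List (Fin b)) (p : Fin b) : PLt (E.f σ) (E.f (σ ++ [p])) :=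
  (succT_plt E.hT (E.f_mem σ) p).trans_prefix (E.f_succ_prefix σ p)

lemma f_mono {σ τ : List (Fin b)} (h : σ <+: τ) : E.f σ <+: E.f τ := by
  induction τ using List.reverseRecOn with
  | nil => rw [List.prefix_nil.mp h]
  | append_singleton τ q ih =>
    by_cases he : σ = τ ++ [q]
    · rw [he]
    · have hlen : σ.length ≤ τ.length := by
        have h1 := h.length_le
        simp only [List.length_append, List.length_singleton] at h1
        rcases Nat.lt_or_ge σ.length (τ.length + 1) with h2 | h2
        · omega
        · exact absurd (h.eq_of_length (by simp; omega)) he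
      have hστ : σ <+: τ := List.prefix_of_prefix_length_le h ((plt_snoc τ q).1) hlen
      exact (ih hστ).trans (E.f_snoc_plt τ q).1

lemma f_plt {σ τ : List (Fin b)} (h : PLt σ τ) : PLt (E.f σ) (E.f τ) := by
  refine ⟨E.f_mono h.1, fun he => ?_⟩
  have h1 := E.f_lvl σ
  have h2 := E.f_lvl τ
  rw [he, h2] at h1
  exact absurd (E.hd.injective h1) (by have := h.length_lt; omega)

lemma f_reflect_aux : ∀ N : ℕ, ∀ σ τ : List (Fin b), σ.length + τ.length ≤ N →
    E.f σ <+: E.f τ → σ <+: τ := by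
  intro N
  induction N with
  | zero =>
    intro σ τ hN h
    have : σ = [] := by simpa using List.length_eq_zero_iff.mp (by omega)
    simp [this]
  | succ N ih =>
    intro σ τ hN h
    induction τ using List.reverseRecOn with
    | nil =>
      have h2 : E.f [] <+: E.f σ := E.f_mono σ.nil_prefix
      have heq : E.f σ = E.f [] := prefix_antisymm h h2
      have := E.f_lvl σ
      rw [heq, E.f_lvl []] at this
      have hl0 : σ.length = 0 := by simpa using (E.hd.injective this.symm)
      simp [List.length_eq_zero_iff.mp hl0]
    | append_singleton τ' q _ =>
      by_cases hcase : E.f σ <+: E.f τ'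
      · have hlen : τ'.length < (τ' ++ [q]).length := by simp
        exact (ih σ τ' (by simp at hN; omega) hcase).trans ((plt_snoc τ' q).1)
      · have hcomp : E.f τ' <+: E.f σ := by
          rcases List.prefix_or_prefix_of_prefix h (E.f_mono ((plt_snoc τ' q).1)) with hc | hc
          · exact absurd hc hcase
          · exact hc
        -- show E.f σ = E.f (τ' ++ [q])
        have hfeq : E.f σ = E.f (τ' ++ [q]) := by
          by_contra hne
          have hplt1 : PLt (E.f τ') (E.f σ) :=
            ⟨hcomp, fun he => hcase (he ▸ List.prefix_rfl)⟩
          have hplt2 : PLt (E.f σ) (E.f (τ' ++ [q])) := ⟨h, hne⟩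
          have l1 := lvl_strict_mono (E.f_mem τ') hplt1
          have l2 := lvl_strict_mono (E.f_mem σ) hplt2
          rw [E.f_lvl, E.f_lvl] at l1
          rw [E.f_lvl, E.f_lvl] at l2
          have m1 := E.hd.lt_iff_lt.mp l1
          have m2 := E.hd.lt_iff_lt.mp l2
          simp at m2
          omega
        -- lengths equal
        have hleq : σ.length = τ'.length + 1 := by
          have := E.f_lvl σ
          rw [hfeq, E.f_lvl] at this
          have h9 := E.hd.injective this
          simp at h9; omega
        -- σ is nonempty
        obtain ⟨σ', p, rfl⟩ : ∃ σ'' p, σ = σ'' ++ [p] := by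
          rcases σ.eq_nil_or_concat with rfl | ⟨L, x, rfl⟩
          · simp at hleq
          · exact ⟨L, x, by simp⟩
        have hσ'pre : E.f σ' <+: E.f (τ' ++ [q]) := (E.f_snoc_plt σ' p).1.trans (hfeq ▸ List.prefix_rfl)
        have hστ' : σ' <+: τ' ++ [q] := ih σ' (τ' ++ [q]) (by simp at hN ⊢; omega) hσ'pre
        have hσ'τ' : σ' = τ' := by
          apply List.IsPrefix.eq_of_length
          · exact List.prefix_of_prefix_length_le hστ' ((plt_snoc τ' q).1) (by simp at hleq ⊢; omega)
          · simp at hleq; omega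
        subst hσ'τ'
        -- now p = q
        have hs1 : succT E.T (E.f σ') p <+: E.f (σ' ++ [q]) := hfeq ▸ E.f_succ_prefix σ' p
        have hs2 : succT E.T (E.f σ') q <+: E.f (σ' ++ [q]) := E.f_succ_prefix σ' q
        have hcmp := List.prefix_or_prefix_of_prefix hs1 hs2
        have hsucceq : succT E.T (E.f σ') p = succT E.T (E.f σ') q := by
          have imm1 := (succT_spec E.hT (E.f_mem σ') p).1
          have imm2 := (succT_spec E.hT (E.f_mem σ') q).1
          rcases hcmp with hc | hc
          · by_contra hne
            exact imm2.2.2.2 ⟨_, imm1.2.1, imm1.2.2.1, ⟨hc, hne⟩⟩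
          · by_contra hne
            exact imm1.2.2.2 ⟨_, imm2.2.1, imm2.2.2.1, ⟨hc, fun he => hne he.symm⟩⟩
        have hpq : p = q := by
          have hp1 := (succT_spec E.hT (E.f_mem σ') p).2
          have hq1 := (succT_spec E.hT (E.f_mem σ') q).2
          rw [hsucceq] at hp1
          exact snoc_prefix_unique hp1 hq1
        rw [hpq]

lemma f_reflect {σ τ : List (Fin b)} (h : E.f σ <+: E.f τ) : σ <+: τ :=
  E.f_reflect_aux (σ.length + τ.length) σ τ le_rfl h

lemma f_inj {σ τ : List (Fin b)} (h : E.f σ = E.f τ) : σ = τ :=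
  prefix_antisymm (E.f_reflect (h ▸ List.prefix_rfl)) (E.f_reflect (h ▸ List.prefix_rfl))


lemma capture_aux {a : List (Fin b)} (haA : a ∈ E.A) {i : ℕ} (hi : lvl E.T a = E.d i) :
    ∀ j ≤ i, ∃ σ : List (Fin b), σ.length = j ∧ E.f σ = anc E.T a (E.d j) := by
  intro j
  induction j with
  | zero =>
    intro _
    refine ⟨[], rfl, ?_⟩
    rw [f_nil]
    exact anc_unique E.hT (E.hAT haA) E.hr (E.hrA a haA) E.hrl
  | succ j ih =>
    intro hji
    obtain ⟨σ, hσl, hσf⟩ := ih (by omega)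
    have haT : a ∈ E.T := E.hAT haA
    have hdj : E.d j ≤ lvl E.T a := by rw [hi]; exact E.hd.monotone (by omega)
    have hdj1 : E.d (j+1) ≤ lvl E.T a := by rw [hi]; exact E.hd.monotone (by omega)
    obtain ⟨hu1, hu2, hu3⟩ := anc_spec E.hT haT hdj
    have huplt : PLt (anc E.T a (E.d j)) a := by
      refine ⟨hu2, fun he => ?_⟩
      rw [he, hi] at hu3
      have := E.hd.injective hu3
      omega
    obtain ⟨p, hp⟩ := exists_snoc_prefix huplt
    have hsa : succT E.T (anc E.T a (E.d j)) p <+: a := succT_prefix_of_plt E.hT hu1 haT huplt hp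
    have hsT : succT E.T (anc E.T a (E.d j)) p ∈ E.T := succT_mem E.hT hu1 p
    have hslvl : lvl E.T (succT E.T (anc E.T a (E.d j)) p) = E.d j + 1 := by
      rw [lvl_succT E.hT hu1, hu3]
    obtain ⟨hv1, hv2, hv3⟩ := anc_spec E.hT haT hdj1
    have hpre : succT E.T (anc E.T a (E.d j)) p <+: anc E.T a (E.d (j+1)) := by
      rcases List.prefix_or_prefix_of_prefix hsa hv2 with hc | hc
      · exact hc
      · have heq : anc E.T a (E.d (j+1)) = succT E.T (anc E.T a (E.d j)) p := by
          apply eq_of_prefix_lvl hv1 hsT hv2 hsa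
          have hle1 : lvl E.T (anc E.T a (E.d (j+1))) ≤ E.d j + 1 := by
            rw [← hslvl]; exact lvl_mono hv1 hc
          have hle2 : E.d j < E.d (j+1) := E.hd (by omega)
          rw [hv3, hslvl]; omega
        rw [heq]
    refine ⟨σ ++ [p], by simp [hσl], ?_⟩
    rw [E.f_snoc, hσl]
    rw [← hσf] at hpre
    exact step_capture E.hT E.hAT E.hAlcp (E.hgap j) (E.f_mem σ)
      (by rw [E.f_lvl, hσl]) haA hdj1 hpre

lemma mem_range_f {a : List (Fin b)} (haA : a ∈ E.A) {i : ℕ} (hi : lvl E.T a = E.d i) :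
    ∃ σ : List (Fin b), σ.length = i ∧ E.f σ = a := by
  obtain ⟨σ, h1, h2⟩ := E.capture_aux haA hi i le_rfl
  refine ⟨σ, h1, ?_⟩
  rw [h2, ← hi, anc_self E.hT (E.hAT haA)]

end Setup

lemma ncard_plt_set {β : Type*} (σ : List β) : {ρ | PLt ρ σ}.ncard = σ.length := by
  have hset : {ρ | PLt ρ σ} = (fun i => σ.take i) '' ↑(Finset.range σ.length) := by
    ext ρ
    simp only [Set.mem_setOf_eq, Set.mem_image, Finset.coe_range, Set.mem_Iio]
    constructor
    · intro h
      refine ⟨ρ.length, h.length_lt, ?_⟩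
      exact (List.prefix_iff_eq_take.mp h.1).symm
    · rintro ⟨i, hi, rfl⟩
      exact plt_of_prefix_length (List.take_prefix i σ) (by simp; omega)
  rw [hset]
  rw [Set.ncard_image_of_injOn, Set.ncard_coe_finset, Finset.card_range]
  intro i hi j hj hij
  simp only [Finset.coe_range, Set.mem_Iio] at hi hj
  have h2 := congrArg List.length hij
  simp only [List.length_take] at h2
  omega


end Stmt9

theorem stmt9 (b n : ℕ) (hb : 2 ≤ b) (hn : 1 ≤ n)
    (T : Set (List (Fin b))) (hT : IsStrongSubtreeInf Set.univ T)
    (F : Set (List (Fin b))) (hFT : F ⊆ T) (hFfin : F.Finite) (hFcard : F.ncard = n) :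
    ∃ S, IsStrongSubtreeFin T S (2 * n - 1) ∧ F ⊆ S := by
  classical
  have hb0 : 0 < b := by omega
  set m := 2 * n - 1 with hmdef
  have hm1 : 1 ≤ m := by omega
  set Fs := hFfin.toFinset with hFsdef
  have hFscard : Fs.card = n := by
    rw [Set.ncard_eq_toFinset_card F hFfin] at hFcard; exact hFcard
  have hFsne : Fs.Nonempty := by
    rw [hFfin.toFinset_nonempty]
    exact Set.nonempty_of_ncard_ne_zero (by omega)
  set A := Finset.image₂ Stmt9.lcp Fs Fs with hAdef
  have hFsA : ∀ x ∈ Fs, x ∈ A := by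
    intro x hx
    rw [hAdef]
    have := Finset.mem_image₂_of_mem (f := Stmt9.lcp) hx hx
    rwa [Stmt9.lcp_self] at this
  have hFsT : ∀ x ∈ Fs, x ∈ T := fun x hx => hFT (hFfin.mem_toFinset.mp hx)
  have hAT : ↑A ⊆ T := by
    intro a ha
    rw [hAdef] at ha
    obtain ⟨x, hx, y, hy, rfl⟩ := Finset.mem_image₂.mp ha
    exact Stmt9.lcp_mem hT (hFsT x hx) (hFsT y hy)
  have hAlcp : ∀ a ∈ A, ∀ a' ∈ A, Stmt9.lcp a a' ∈ A := by
    intro a ha a' ha'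
    rw [hAdef] at ha ha' ⊢
    obtain ⟨x, hx, y, hy, rfl⟩ := Finset.mem_image₂.mp ha
    obtain ⟨x', hx', y', hy', rfl⟩ := Finset.mem_image₂.mp ha'
    rcases Stmt9.lcp_lcp x y (Stmt9.lcp x' y') with h | h <;> rw [h] <;>
      rw [Stmt9.lcp_comm] <;>
      rcases Stmt9.lcp_lcp x' y' _ with h2 | h2 <;> rw [h2] <;>
      rw [Stmt9.lcp_comm] <;>
      exact Finset.mem_image₂_of_mem (by assumption) (by assumption)
  have hAcard : A.card ≤ m := by
    rw [hAdef]
    exact le_trans (Stmt9.lcp_closure_card Fs hFsne) (by omega)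
  have hAne : A.Nonempty := hFsne.elim fun x hx => ⟨x, hFsA x hx⟩
  -- the set of levels of A
  set L := A.image (lvl T) with hLdef
  set k := L.card with hkdef
  have hLne : L.Nonempty := hAne.image _
  have hk1 : 1 ≤ k := Finset.card_pos.mpr hLne
  have hkm : k ≤ m := by
    rw [hkdef, hLdef]
    exact le_trans Finset.card_image_le hAcard
  set sl := L.sort (· ≤ ·) with hsldef
  have hsll : sl.length = k := by rw [hsldef, hkdef]; exact Finset.length_sort _
  have hsorted : StrictMono sl.get := by
    rw [hsldef]
    exact (L.sortedLT_sort).strictMono_get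
  set d : ℕ → ℕ :=
    fun i => if i < k then sl.getD i 0 else sl.getD (k-1) 0 + (i + 1 - k) with hddef
  have hdlt : ∀ i, i < k → d i = sl.getD i 0 := by
    intro i h; simp only [hddef]; rw [if_pos h]
  have hdge : ∀ i, k ≤ i → d i = sl.getD (k-1) 0 + (i + 1 - k) := by
    intro i h; simp only [hddef]; rw [if_neg (by omega)]
  have hgetmono : ∀ i j, i < k → j < k → i ≤ j → sl.getD i 0 ≤ sl.getD j 0 := by
    intro i j hi hj hij
    rw [List.getD_eq_get sl 0 ⟨i, by omega⟩, List.getD_eq_get sl 0 ⟨j, by omega⟩]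
    exact hsorted.monotone (by simp only [Fin.mk_le_mk]; exact hij)
  have hgetstrict : ∀ i j, i < k → j < k → i < j → sl.getD i 0 < sl.getD j 0 := by
    intro i j hi hj hij
    rw [List.getD_eq_get sl 0 ⟨i, by omega⟩, List.getD_eq_get sl 0 ⟨j, by omega⟩]
    exact hsorted (by simp only [Fin.mk_lt_mk]; exact hij)
  have hslmem : ∀ x, x ∈ sl → x ∈ L := by
    intro x hx
    rw [hsldef] at hx
    exact (Finset.mem_sort _).mp hx
  have hgetmem : ∀ i, i < k → sl.getD i 0 ∈ L := by
    intro i h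
    rw [List.getD_eq_get sl 0 ⟨i, by omega⟩]
    exact hslmem _ (sl.get_mem _)
  have hd : StrictMono d := by
    apply strictMono_nat_of_lt_succ
    intro i
    by_cases h1 : i + 1 < k
    · rw [hdlt i (by omega), hdlt (i+1) h1]
      exact hgetstrict i (i+1) (by omega) h1 (by omega)
    · by_cases h2 : i < k
      · rw [hdlt i h2, hdge (i+1) (by omega)]
        have h3 := hgetmono i (k-1) h2 (by omega) (by omega)
        omega
      · rw [hdge i (by omega), hdge (i+1) (by omega)]
        omega
  have hdL : ∀ i, i < k → d i ∈ L := by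
    intro i h
    rw [hdlt i h]
    exact hgetmem i h
  have hLd : ∀ x ∈ L, ∃ i, i < k ∧ d i = x := by
    intro x hx
    have hx2 : x ∈ sl := by rw [hsldef]; exact (Finset.mem_sort _).mpr hx
    obtain ⟨t, ht⟩ := List.mem_iff_get.mp hx2
    refine ⟨t.1, by omega, ?_⟩
    rw [hdlt t.1 (by omega), List.getD_eq_get sl 0 t]
    exact ht
  have hgap : ∀ j, ∀ a ∈ A, d j < lvl T a → d (j+1) ≤ lvl T a := by
    intro j a ha hlt
    have hmem : lvl T a ∈ L := Finset.mem_image_of_mem _ ha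
    obtain ⟨t, htk, htd⟩ := hLd _ hmem
    rw [hdlt t htk] at htd
    by_cases hj : j + 1 < k
    · rw [hdlt j (by omega)] at hlt
      rw [hdlt (j+1) hj, ← htd]
      rw [← htd] at hlt
      have hjt : j < t := by
        by_contra hc
        have := hgetmono t j htk (by omega) (by omega)
        omega
      exact hgetmono (j+1) t hj htk (by omega)
    · exfalso
      have hle : lvl T a ≤ sl.getD (k-1) 0 := by
        rw [← htd]
        exact hgetmono t (k-1) htk (by omega) (by omega)
      have hge : sl.getD (k-1) 0 ≤ d j := by
        by_cases h2 : j < k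
        · have hjk : j = k - 1 := by omega
          rw [hdlt j h2, hjk]
        · rw [hdge j (by omega)]; omega
      omega
  -- the root
  obtain ⟨r, hrA', hrmin⟩ := A.exists_min_image List.length hAne
  have hrpre : ∀ a ∈ A, r <+: a := by
    intro a ha
    have h1 := hAlcp r hrA' a ha
    have h2 := hrmin _ h1
    have h3 : Stmt9.lcp r a = r := (Stmt9.lcp_prefix_left r a).eq_of_length
      (le_antisymm (Stmt9.lcp_prefix_left r a).length_le h2)
    rw [← h3]; exact Stmt9.lcp_prefix_right r a
  have hrT : r ∈ T := hAT hrA'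
  have hrl : lvl T r = d 0 := by
    have h1 : lvl T r ∈ L := Finset.mem_image_of_mem _ hrA'
    obtain ⟨i, hik, hdi⟩ := hLd _ h1
    have h2 : d 0 ∈ L := hdL 0 (by omega)
    obtain ⟨a0, ha0A, ha0⟩ := Finset.mem_image.mp h2
    have h3 : lvl T r ≤ d 0 := by
      rw [← ha0]
      exact Stmt9.lvl_mono hrT (hrpre a0 ha0A)
    have h4 : d 0 ≤ d i := hd.monotone (by omega)
    omega
  let E : Stmt9.Setup b := ⟨T, A, d, r, hb0, hT, hAT, hAlcp, hd, hgap, hrT, hrl, hrpre⟩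
  set S := E.f '' {σ : List (Fin b) | σ.length < m} with hSdef
  have hfmem : ∀ σ : List (Fin b), σ.length < m → E.f σ ∈ S := fun σ h => ⟨σ, h, rfl⟩
  have hSsub : ∀ x ∈ S, ∃ σ : List (Fin b), σ.length < m ∧ E.f σ = x := by
    rintro x ⟨σ, hσ, rfl⟩; exact ⟨σ, hσ, rfl⟩
  have hfT : ∀ σ : List (Fin b), E.f σ ∈ T := fun σ => E.f_mem σ
  have hflvl : ∀ σ : List (Fin b), lvl T (E.f σ) = d σ.length := fun σ => E.f_lvl σ
  -- level computation inside S
  have hlvlS : ∀ σ : List (Fin b), σ.length < m → lvl S (E.f σ) = σ.length := by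
    intro σ hσ
    have hset : {x ∈ S | PLt x (E.f σ)} = E.f '' {ρ | PLt ρ σ} := by
      ext x
      simp only [Set.mem_setOf_eq, Set.mem_image]
      constructor
      · rintro ⟨hxS, hx⟩
        obtain ⟨ρ, hρm, rfl⟩ := hSsub x hxS
        exact ⟨ρ, ⟨E.f_reflect hx.1, fun he => hx.2 (by rw [he])⟩, rfl⟩
      · rintro ⟨ρ, hρ, rfl⟩
        refine ⟨hfmem ρ (by have := hρ.length_lt; omega), E.f_plt hρ⟩
    rw [lvl, hset, Set.ncard_image_of_injOn (fun a _ c _ h => E.f_inj h), Stmt9.ncard_plt_set]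
  refine ⟨S, ⟨?_, ?_, ?_, ?_, ?_, ?_⟩, ?_⟩
  · -- S ⊆ T
    rintro x ⟨σ, hσ, rfl⟩
    exact hfT σ
  · -- Nonempty
    exact ⟨E.f [], hfmem [] (by simp; omega)⟩
  · -- UniquelyRooted
    refine ⟨E.f [], hfmem [] (by simp; omega), ?_⟩
    rintro x ⟨σ, hσ, rfl⟩
    exact E.f_mono σ.nil_prefix
  · -- BalancedOfHeight
    intro C hC
    obtain ⟨hCS, hCchain, hCmax⟩ := hC
    have hSfin : S.Finite := (List.finite_length_lt (α := Fin b) m).image _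
    have hCfin : C.Finite := hSfin.subset hCS
    refine ⟨hCfin, ?_⟩
    set D := {ρ : List (Fin b) | ρ.length < m ∧ E.f ρ ∈ C} with hDdef
    have hCD : ∀ x ∈ C, ∃ ρ ∈ D, E.f ρ = x := by
      intro x hx
      obtain ⟨ρ, hρ, rfl⟩ := hSsub x (hCS hx)
      exact ⟨ρ, ⟨hρ, hx⟩, rfl⟩
    have hadd : ∀ ρ : List (Fin b), ρ.length < m → (∀ τ ∈ D, ρ <+: τ ∨ τ <+: ρ) → ρ ∈ D := by
      intro ρ hρm hcomp
      have hch : ∀ s ∈ insert (E.f ρ) C, ∀ t ∈ insert (E.f ρ) C, s <+: t ∨ t <+: s := by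
        intro s hs t ht
        rcases hs with rfl | hs <;> rcases ht with rfl | ht
        · exact Or.inl List.prefix_rfl
        · obtain ⟨τ, hτD, rfl⟩ := hCD t ht
          rcases hcomp τ hτD with h | h
          · exact Or.inl (E.f_mono h)
          · exact Or.inr (E.f_mono h)
        · obtain ⟨τ, hτD, rfl⟩ := hCD s hs
          rcases hcomp τ hτD with h | h
          · exact Or.inr (E.f_mono h)
          · exact Or.inl (E.f_mono h)
        · exact hCchain s hs t ht
      have heq := hCmax (insert (E.f ρ) C) (Set.subset_insert _ _)
        (by rintro x (rfl | hx)
            · exact hfmem ρ hρm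
            · exact hCS hx) hch
      have : E.f ρ ∈ C := heq ▸ Set.mem_insert _ _
      exact ⟨hρm, this⟩
    have hnil : ([] : List (Fin b)) ∈ D :=
      hadd [] (by simp; omega) (fun τ _ => Or.inl τ.nil_prefix)
    have hDfin : D.Finite := (List.finite_length_lt (α := Fin b) m).subset (fun ρ hρ => hρ.1)
    obtain ⟨τ0, hτ0D, hτ0max⟩ := Set.exists_max_image D List.length hDfin ⟨[], hnil⟩
    have hDchain : ∀ ρ ∈ D, ρ <+: τ0 := by
      intro ρ hρ
      rcases hCchain _ hρ.2 _ hτ0D.2 with h | h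
      · exact E.f_reflect h
      · have h2 := E.f_reflect h
        have h3 := hτ0max ρ hρ
        rw [Stmt9.prefix_antisymm h2 (List.prefix_of_prefix_length_le List.prefix_rfl h2 h3)]
    have hDtake : ∀ i, i ≤ τ0.length → τ0.take i ∈ D := by
      intro i hi
      apply hadd _ (by simp only [List.length_take]; have := hτ0D.1; omega)
      intro τ hτ
      exact List.prefix_or_prefix_of_prefix (List.take_prefix i τ0) (hDchain τ hτ)
    have hτ0len : τ0.length = m - 1 := by
      by_contra h
      have hlt : τ0.length + 1 < m := by have := hτ0D.1; omega
      have hmem : τ0 ++ [⟨0, hb0⟩] ∈ D := by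
        apply hadd _ (by simp; omega)
        intro τ hτ
        exact Or.inr ((hDchain τ hτ).trans (Stmt9.plt_snoc τ0 _).1)
      have := hτ0max _ hmem
      simp at this
    have hDeq : D = (fun i => τ0.take i) '' ↑(Finset.range m) := by
      ext ρ
      simp only [Set.mem_image, Finset.coe_range, Set.mem_Iio]
      constructor
      · intro hρ
        exact ⟨ρ.length, hρ.1, (List.prefix_iff_eq_take.mp (hDchain ρ hρ)).symm⟩
      · rintro ⟨i, hi, rfl⟩
        exact hDtake i (by omega)
    have hCeq : C = E.f '' D := by
      ext x
      constructor
      · intro hx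
        obtain ⟨ρ, hρ, rfl⟩ := hCD x hx
        exact ⟨ρ, hρ, rfl⟩
      · rintro ⟨ρ, hρ, rfl⟩
        exact hρ.2
    rw [hCeq, hDeq]
    rw [Set.ncard_image_of_injOn (fun a _ c _ h => E.f_inj h)]
    rw [Set.ncard_image_of_injOn ?hinj, Set.ncard_coe_finset, Finset.card_range]
    case hinj =>
      intro i hi j hj hij
      simp only [Finset.coe_range, Set.mem_Iio] at hi hj
      have h2 := congrArg List.length hij
      simp only [List.length_take] at h2
      omega
  · -- LevelsAligned
    rintro s hs s' hs' h
    obtain ⟨σ, hσ, rfl⟩ := hSsub s hs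
    obtain ⟨τ, hτ, rfl⟩ := hSsub s' hs'
    rw [hlvlS σ hσ, hlvlS τ hτ] at h
    rw [hflvl σ, hflvl τ, h]
  · -- SuccCond
    intro s hs hnonmax t himm
    obtain ⟨σ, hσm, rfl⟩ := hSsub s hs
    obtain ⟨x, hxS, hxplt⟩ := hnonmax
    obtain ⟨τ, hτm, rfl⟩ := hSsub x hxS
    have hστ : PLt σ τ := ⟨E.f_reflect hxplt.1, fun he => hxplt.2 (by rw [he])⟩
    have hlen : σ.length + 1 < m := by have := hστ.length_lt; omega
    obtain ⟨p, rfl⟩ := Stmt9.immSuc_eq_succT hT himm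
    have himmS : ImmSuc S (E.f σ) (E.f (σ ++ [p])) := by
      refine ⟨hfmem σ hσm, hfmem (σ ++ [p]) (by simp; omega), E.f_snoc_plt σ p, ?_⟩
      rintro ⟨z, hzS, hz1, hz2⟩
      obtain ⟨ρ, hρm, rfl⟩ := hSsub z hzS
      have h1 : PLt σ ρ := ⟨E.f_reflect hz1.1, fun he => hz1.2 (by rw [he])⟩
      have h2 : PLt ρ (σ ++ [p]) := ⟨E.f_reflect hz2.1, fun he => hz2.2 (by rw [he])⟩
      have := h1.length_lt
      have := h2.length_lt
      simp at *; omega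
    refine ⟨E.f (σ ++ [p]), ⟨himmS, E.f_succ_prefix σ p⟩, ?_⟩
    rintro y ⟨himmS', hpre⟩
    obtain ⟨ρ, hρm, rfl⟩ := hSsub y himmS'.2.1
    have hσρ : PLt σ ρ := ⟨E.f_reflect himmS'.2.2.1.1, fun he => himmS'.2.2.1.2 (by rw [he])⟩
    have hρlen : ρ.length = σ.length + 1 := by
      by_contra hne
      have hlt : σ.length + 1 < ρ.length := by have := hσρ.length_lt; omega
      set ρ' := ρ.take (σ.length + 1) with hρ'def
      have hρ'len : ρ'.length = σ.length + 1 := by simp [hρ'def]; omega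
      have hσρ' : σ <+: ρ' :=
        List.prefix_of_prefix_length_le hσρ.1 (List.take_prefix _ ρ) (by omega)
      have h1 : PLt (E.f σ) (E.f ρ') := E.f_plt ⟨hσρ', by intro he; rw [he] at hρ'len; omega⟩
      have h2 : PLt (E.f ρ') (E.f ρ) :=
        E.f_plt ⟨List.take_prefix _ ρ, by intro he; rw [he] at hρ'len; omega⟩
      exact himmS'.2.2.2 ⟨E.f ρ', hfmem ρ' (by omega), h1, h2⟩
    obtain ⟨u, hu⟩ := hσρ.1
    have hulen : u.length = 1 := by
      have := congrArg List.length hu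
      simp at this; omega
    obtain ⟨q, rfl⟩ := List.length_eq_one_iff.mp hulen
    subst hu
    have hq : q = p :=
      Stmt9.succT_dir_unique hT (hfT σ) (E.f_succ_prefix σ q) hpre
    rw [hq]
  · -- F ⊆ S
    intro x hx
    have hxA : x ∈ A := hFsA x (hFfin.mem_toFinset.mpr hx)
    have hxL : lvl T x ∈ L := Finset.mem_image_of_mem _ hxA
    obtain ⟨i, hik, hdi⟩ := hLd _ hxL
    obtain ⟨σ, hσl, hσf⟩ := E.mem_range_f hxA hdi.symm
    rw [← hσf]
    exact hfmem σ (by omega)
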